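/- Let A = [[a,b],[c,d]] be a 2×2 matrix with entries in the real quaternions ℍ such that det_ℍ(A) = 1. Then A ∈ Sp(1,1) (i.e. ᵀĀ·H·A = H with H = [[1,0],[0,−1]]) if and only if the map L_A(q) = (a·q + b)·(c·q + d)⁻¹ is a Möbius transformation of the quaternionic unit disc, that is: c·q + d ≠ 0 for every q ∈ Δ_ℍ, L_A maps Δ_ℍ into Δ_ℍ, and L_A restricted to Δ_ℍ is a bijection of Δ_ℍ onto Δ_ℍ. -/

import Mathlib

open scoped Quaternion

/-- The Dieudonné determinant of a 2×2 quaternionic matrix. -/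
noncomputable def detH (A : Matrix (Fin 2) (Fin 2) ℍ[ℝ]) : ℝ :=
  Real.sqrt (‖A 0 0‖ ^ 2 * ‖A 1 1‖ ^ 2 + ‖A 1 0‖ ^ 2 * ‖A 0 1‖ ^ 2
    - 2 * (A 1 0 * star (A 0 0) * A 0 1 * star (A 1 1)).re)

namespace FltSp11Aux

open Quaternion Set Filter Topology

lemma re_mul_comm (x y : ℍ[ℝ]) : (x*y).re = (y*x).re := by
  simp only [Quaternion.re_mul]; ring

lemma normSq_eq_sq_norm (x : ℍ[ℝ]) : normSq x = ‖x‖^2 := by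
  rw [Quaternion.normSq_eq_norm_mul_self, sq]

lemma normSq_lt_one {x : ℍ[ℝ]} (h : ‖x‖ < 1) : normSq x < 1 := by
  rw [normSq_eq_sq_norm]; nlinarith [norm_nonneg x]

lemma norm_lt_one {x : ℍ[ℝ]} (h : normSq x < 1) : ‖x‖ < 1 := by
  rw [normSq_eq_sq_norm] at h; nlinarith [norm_nonneg x]

lemma norm_lt_norm {x y : ℍ[ℝ]} (h : normSq x < normSq y) : ‖x‖ < ‖y‖ := by
  rw [normSq_eq_sq_norm, normSq_eq_sq_norm] at h
  nlinarith [norm_nonneg x, norm_nonneg y]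

lemma normSq_pos_ne {x : ℍ[ℝ]} (h : 0 < normSq x) : x ≠ 0 := by
  intro h0; rw [h0, map_zero] at h; exact lt_irrefl _ h

lemma norm_eq_one_of_normSq {x : ℍ[ℝ]} (h : normSq x = 1) : ‖x‖ = 1 := by
  have h2 : ‖x‖^2 = 1 := by rw [← normSq_eq_sq_norm]; exact h
  have h3 : (‖x‖ - 1) * (‖x‖ + 1) = 0 := by linear_combination h2
  rcases mul_eq_zero.mp h3 with h4 | h4
  · linarith
  · nlinarith [norm_nonneg x]

lemma eq_one_of_sq_eq_one_of_pos {x : ℝ} (h : x*x = 1) (hx : 0 < x) : x = 1 := by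
  have h3 : (x - 1) * (x + 1) = 0 := by linear_combination h
  rcases mul_eq_zero.mp h3 with h4 | h4
  · linarith
  · linarith

lemma expandF (c d q : ℍ[ℝ]) :
    (normSq (c*q+d) : ℝ) = normSq c * normSq q + normSq d + 2*((star d * c) * q).re := by
  have h := Quaternion.normSq_add (c*q) d
  rw [h, map_mul]
  have h2 : ((c*q) * star d).re = ((star d * c) * q).re := by
    simp only [Quaternion.re_mul, Quaternion.imI_mul, Quaternion.imJ_mul, Quaternion.imK_mul,
      Quaternion.re_star, Quaternion.imI_star, Quaternion.imJ_star, Quaternion.imK_star]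
    ring
  rw [h2]

lemma matrix_iff (a b c d : ℍ[ℝ]) :
    (!![a, b; c, d]).conjTranspose * !![(1 : ℍ[ℝ]), 0; 0, -1] * !![a, b; c, d] =
        !![(1 : ℍ[ℝ]), 0; 0, -1] ↔
    (star a * a - star c * c = 1 ∧ star a * b - star c * d = 0 ∧
     star b * a - star d * c = 0 ∧ star b * b - star d * d = -1) := by
  have hct : (!![a, b; c, d]).conjTranspose = !![star a, star c; star b, star d] := by
    apply Matrix.ext
    intro i j
    fin_cases i <;> fin_cases j <;> simp [Matrix.conjTranspose_apply]
  rw [hct, Matrix.mul_fin_two, Matrix.mul_fin_two]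
  have e11 : (star a * 1 + star c * 0) * a + (star a * 0 + star c * -1) * c
      = star a * a - star c * c := by noncomm_ring
  have e12 : (star a * 1 + star c * 0) * b + (star a * 0 + star c * -1) * d
      = star a * b - star c * d := by noncomm_ring
  have e21 : (star b * 1 + star d * 0) * a + (star b * 0 + star d * -1) * c
      = star b * a - star d * c := by noncomm_ring
  have e22 : (star b * 1 + star d * 0) * b + (star b * 0 + star d * -1) * d
      = star b * b - star d * d := by noncomm_ring
  rw [e11, e12, e21, e22]
  constructor
  · intro h
    have h00 := congrFun (congrFun h 0) 0
    have h01 := congrFun (congrFun h 0) 1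
    have h10 := congrFun (congrFun h 1) 0
    have h11 := congrFun (congrFun h 1) 1
    simp only [Matrix.cons_val', Matrix.cons_val_zero, Matrix.cons_val_one, Matrix.head_cons,
      Matrix.empty_val', Matrix.cons_val_fin_one, Matrix.head_fin_const,
      Matrix.of_apply] at h00 h01 h10 h11
    exact ⟨h00, h01, h10, h11⟩
  · rintro ⟨h1, h2, h3, h4⟩
    rw [h1, h2, h3, h4]

lemma key_expandF (a b c d q : ℍ[ℝ]) :
    star (c*q+d) * (c*q+d) - star (a*q+b) * (a*q+b)
      = star q * (star c * c - star a * a) * q + star q * (star c * d - star a * b)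
        + (star d * c - star b * a) * q + (star d * d - star b * b) := by
  simp only [star_add, star_mul]; noncomm_ring

lemma key_expandG (a b c d w : ℍ[ℝ]) :
    (a - w*c) * star (a - w*c) - (w*d - b) * star (w*d - b)
      = (a * star a - b * star b) - (a * star c - b * star d) * star w
        - w * (c * star a - d * star b) + w * (c * star c - d * star d) * star w := by
  simp only [star_sub, star_mul]; noncomm_ring

lemma sandwichF (a b c d : ℍ[ℝ]) (h1 : star a * a - star c * c = 1)
    (h2 : star a * b - star c * d = 0) (h3 : star b * a - star d * c = 0)
    (h4 : star b * b - star d * d = -1) (q : ℍ[ℝ]) :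
    normSq (c*q+d) = normSq (a*q+b) + 1 - normSq q := by
  have hc : star c * c - star a * a = -1 := by rw [← neg_sub, h1]
  have hcd : star c * d - star a * b = 0 := by rw [← neg_sub, h2, neg_zero]
  have hdc : star d * c - star b * a = 0 := by rw [← neg_sub, h3, neg_zero]
  have hd : star d * d - star b * b = 1 := by rw [← neg_sub, h4, neg_neg]
  have key := key_expandF a b c d q
  rw [hc, hcd, hdc, hd] at key
  have e : star q * (-1 : ℍ[ℝ]) * q + star q * 0 + (0:ℍ[ℝ]) * q + 1
      = 1 - ((normSq q : ℝ) : ℍ[ℝ]) := by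
    rw [mul_zero, zero_mul, add_zero, add_zero, mul_neg_one, neg_mul, star_mul_self,
      sub_eq_add_neg]
    exact add_comm _ _
  rw [e, star_mul_self, star_mul_self] at key
  have key2 : ((normSq (c*q+d) : ℝ) : ℍ[ℝ])
      = ((1 - normSq q + normSq (a*q+b) : ℝ) : ℍ[ℝ]) := by
    push_cast
    rw [sub_eq_iff_eq_add] at key
    exact key
  have hr := Quaternion.coe_injective key2
  linarith

lemma sandwichG (a b c d : ℍ[ℝ]) (h1 : a * star a - b * star b = 1)
    (h2 : a * star c - b * star d = 0) (h3 : c * star a - d * star b = 0)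
    (h4 : c * star c - d * star d = -1) (w : ℍ[ℝ]) :
    normSq (a - w*c) = normSq (w*d - b) + 1 - normSq w := by
  have key := key_expandG a b c d w
  rw [h1, h2, h3, h4] at key
  have e : (1:ℍ[ℝ]) - (0:ℍ[ℝ]) * star w - w * 0 + w * (-1 : ℍ[ℝ]) * star w
      = 1 - ((normSq w : ℝ) : ℍ[ℝ]) := by
    rw [mul_zero, zero_mul, mul_neg_one, neg_mul, self_mul_star, sub_zero, sub_zero,
      sub_eq_add_neg]
  rw [e, self_mul_star, self_mul_star] at key
  have key2 : ((normSq (a - w*c) : ℝ) : ℍ[ℝ])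
      = ((1 - normSq w + normSq (w*d - b) : ℝ) : ℍ[ℝ]) := by
    push_cast
    rw [sub_eq_iff_eq_add] at key
    exact key
  have hr := Quaternion.coe_injective key2
  linarith

lemma lin_eq (a b c d w q : ℍ[ℝ]) (h : w * (c*q+d) = a*q+b) :
    (a - w*c) * q = w*d - b := by
  calc (a - w*c) * q = (a*q+b) - (w*(c*q) + b) := by noncomm_ring
    _ = w*(c*q+d) - (w*(c*q)+b) := by rw [h]
    _ = w*d - b := by noncomm_ring

lemma dual_relations (a b c d : ℍ[ℝ]) (h1 : star a * a - star c * c = 1)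
    (h2 : star a * b - star c * d = 0) (h4 : star b * b - star d * d = -1) :
    (a * star a - b * star b = 1) ∧ (a * star c - b * star d = 0) ∧
    (c * star a - d * star b = 0) ∧ (c * star c - d * star d = -1) := by
  have hp : normSq a - normSq c = 1 := by
    have h := h1
    rw [star_mul_self, star_mul_self, ← Quaternion.coe_sub, ← Quaternion.coe_one] at h
    exact Quaternion.coe_injective h
  have hq : normSq b - normSq d = -1 := by
    have h := h4
    rw [star_mul_self, star_mul_self, ← Quaternion.coe_sub,
      show (-1 : ℍ[ℝ]) = ((-1 : ℝ) : ℍ[ℝ]) from by rw [Quaternion.coe_neg, Quaternion.coe_one]]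
      at h
    exact Quaternion.coe_injective h
  have hpos : 0 < normSq a := by nlinarith [normSq_nonneg (a := c)]
  have ha : a ≠ 0 := normSq_pos_ne hpos
  have hsa : star a ≠ 0 := star_ne_zero.mpr ha
  have h2' : star a * b = star c * d := sub_eq_zero.mp h2
  have hb : b = (star a)⁻¹ * (star c * d) := by
    rw [← h2', ← mul_assoc, inv_mul_cancel₀ hsa, one_mul]
  have hane : normSq a ≠ 0 := ne_of_gt hpos
  have hnb : normSq b = (normSq (star a))⁻¹ * (normSq (star c) * normSq d) := by
    rw [hb, map_mul, map_mul, map_inv₀]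
  rw [normSq_star, normSq_star] at hnb
  have hnb' : normSq b * normSq a = normSq c * normSq d := by
    rw [hnb, mul_comm (normSq a)⁻¹, mul_assoc, inv_mul_cancel₀ hane, mul_one]
  have hsd : normSq d = normSq a := by
    linear_combination hnb' - normSq a * hq - normSq d * hp
  have hrd : normSq b = normSq c := by linarith
  have d1 : a * star a - b * star b = 1 := by
    rw [self_mul_star, self_mul_star, ← Quaternion.coe_sub,
      show normSq a - normSq b = 1 from by linarith, Quaternion.coe_one]
  have d4 : c * star c - d * star d = -1 := by
    rw [self_mul_star, self_mul_star, ← Quaternion.coe_sub,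
      show normSq c - normSq d = -1 from by linarith, Quaternion.coe_neg, Quaternion.coe_one]
  have d2 : a * star c - b * star d = 0 := by
    have e1 : star a * (b * star d) = star c * ((normSq a : ℝ) : ℍ[ℝ]) := by
      rw [← mul_assoc, h2', mul_assoc, self_mul_star, hsd]
    have e2 : star a * (a * star c) = star c * ((normSq a : ℝ) : ℍ[ℝ]) := by
      rw [← mul_assoc, star_mul_self, Quaternion.coe_commutes]
    have e3 : b * star d = a * star c := mul_left_cancel₀ hsa (e1.trans e2.symm)
    rw [e3, sub_self]
  have d3 : c * star a - d * star b = 0 := by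
    have h := congrArg star d2
    simpa [star_sub, star_mul, sub_eq_zero] using h
  exact ⟨d1, d2, d3, d4⟩

lemma forward_dir (a b c d : ℍ[ℝ]) (h1 : star a * a - star c * c = 1)
    (h2 : star a * b - star c * d = 0) (h3 : star b * a - star d * c = 0)
    (h4 : star b * b - star d * d = -1) :
    (∀ q : ℍ[ℝ], ‖q‖ < 1 → c * q + d ≠ 0) ∧
      Set.BijOn (fun q : ℍ[ℝ] => (a * q + b) * (c * q + d)⁻¹)
        {q : ℍ[ℝ] | ‖q‖ < 1} {q : ℍ[ℝ] | ‖q‖ < 1} := by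
  obtain ⟨d1, d2, d3, d4⟩ := dual_relations a b c d h1 h2 h4
  have hden0 : ∀ q : ℍ[ℝ], ‖q‖ < 1 → c*q+d ≠ 0 := by
    intro q hq
    apply normSq_pos_ne
    have hs := sandwichF a b c d h1 h2 h3 h4 q
    have hl := normSq_lt_one hq
    nlinarith [normSq_nonneg (a := a*q+b)]
  have hAne : ∀ w : ℍ[ℝ], ‖w‖ < 1 → a - w*c ≠ 0 := by
    intro w hw
    apply normSq_pos_ne
    have hs := sandwichG a b c d d1 d2 d3 d4 w
    have hl := normSq_lt_one hw
    nlinarith [normSq_nonneg (a := w*d - b)]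
  have hmap : ∀ q : ℍ[ℝ], ‖q‖ < 1 → ‖(a*q+b) * (c*q+d)⁻¹‖ < 1 := by
    intro q hq
    have hne := hden0 q hq
    have hlt : ‖a*q+b‖ < ‖c*q+d‖ := by
      apply norm_lt_norm
      have hs := sandwichF a b c d h1 h2 h3 h4 q
      have hl := normSq_lt_one hq
      nlinarith
    rw [norm_mul, norm_inv, ← div_eq_mul_inv, div_lt_one (norm_pos_iff.mpr hne)]
    exact hlt
  refine ⟨hden0, ?_, ?_, ?_⟩
  · intro q hq
    simp only [Set.mem_setOf_eq] at hq ⊢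
    exact hmap q hq
  · intro q₁ hq₁ q₂ hq₂ heq
    simp only [Set.mem_setOf_eq] at hq₁ hq₂ heq
    have hne₁ := hden0 q₁ hq₁
    have hne₂ := hden0 q₂ hq₂
    set w := (a*q₁+b) * (c*q₁+d)⁻¹ with hw
    have hwlt : ‖w‖ < 1 := hmap q₁ hq₁
    have he₁ : w * (c*q₁+d) = a*q₁+b := by
      rw [hw]; exact inv_mul_cancel_right₀ hne₁ _
    have he₂ : w * (c*q₂+d) = a*q₂+b := by
      rw [heq]; exact inv_mul_cancel_right₀ hne₂ _
    exact mul_left_cancel₀ (hAne w hwlt)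
      ((lin_eq a b c d w q₁ he₁).trans (lin_eq a b c d w q₂ he₂).symm)
  · intro w hwmem
    simp only [Set.mem_setOf_eq] at hwmem
    have hA := hAne w hwmem
    set q := (a - w*c)⁻¹ * (w*d - b) with hqdef
    have hqlt : ‖q‖ < 1 := by
      apply norm_lt_one
      rw [hqdef, map_mul, map_inv₀]
      have hgs := sandwichG a b c d d1 d2 d3 d4 w
      have hw1 := normSq_lt_one hwmem
      have hApos : 0 < normSq (a - w*c) := by nlinarith [normSq_nonneg (a := w*d-b)]
      rw [mul_comm, ← div_eq_mul_inv, div_lt_one hApos]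
      nlinarith
    refine ⟨q, by simpa using hqlt, ?_⟩
    have hden := hden0 q hqlt
    have hkey : (a - w*c) * q = w*d - b := by
      rw [hqdef, mul_inv_cancel_left₀ hA]
    have hmain : a*q + b = w * (c*q+d) := by
      calc a*q + b = (a - w*c)*q + (w*(c*q) + b) := by noncomm_ring
        _ = (w*d - b) + (w*(c*q) + b) := by rw [hkey]
        _ = w * (c*q+d) := by noncomm_ring
    show (a*q+b) * (c*q+d)⁻¹ = w
    rw [hmain, mul_inv_cancel_right₀ hden]

set_option maxHeartbeats 1000000 in
lemma reverse_dir (a b c d : ℍ[ℝ])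
    (hE : normSq a * normSq d + normSq c * normSq b
      - 2*(c * star a * b * star d).re = 1)
    (hden : ∀ q : ℍ[ℝ], ‖q‖ < 1 → c * q + d ≠ 0)
    (hbij : Set.BijOn (fun q : ℍ[ℝ] => (a * q + b) * (c * q + d)⁻¹)
        {q : ℍ[ℝ] | ‖q‖ < 1} {q : ℍ[ℝ] | ‖q‖ < 1}) :
    (star a * a - star c * c = 1 ∧ star a * b - star c * d = 0 ∧
     star b * a - star d * c = 0 ∧ star b * b - star d * d = -1) := by
  obtain ⟨hmaps, hinj, hsurj⟩ := hbij
  have r1 : ∀ q : ℍ[ℝ], ‖q‖ < 1 → ‖a*q+b‖ < ‖c*q+d‖ := by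
    intro q hq
    have h := hmaps (show q ∈ {q : ℍ[ℝ] | ‖q‖ < 1} from hq)
    simp only [Set.mem_setOf_eq] at h
    rwa [norm_mul, norm_inv, ← div_eq_mul_inv,
      div_lt_one (norm_pos_iff.mpr (hden q hq))] at h
  -- boundary: ≤
  have bnd : ∀ q : ℍ[ℝ], ‖q‖ = 1 → ‖a*q+b‖ ≤ ‖c*q+d‖ := by
    intro q hq
    have cont : Continuous (fun t : ℝ => ‖t • (c*q) + d‖ - ‖t • (a*q) + b‖) := by
      apply Continuous.sub
      · exact ((continuous_id.smul continuous_const).add continuous_const).norm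
      · exact ((continuous_id.smul continuous_const).add continuous_const).norm
    have htt : Filter.Tendsto (fun t : ℝ => ‖t • (c*q) + d‖ - ‖t • (a*q) + b‖)
        (nhdsWithin (1:ℝ) (Set.Iio 1)) (nhds (‖c*q+d‖ - ‖a*q+b‖)) := by
      apply Filter.Tendsto.mono_left _ (nhdsWithin_le_nhds (s := Set.Iio 1))
      have h := cont.tendsto (1:ℝ)
      simpa [one_smul] using h
    have hev : ∀ᶠ t in nhdsWithin (1:ℝ) (Set.Iio 1),
        0 ≤ ‖t • (c*q) + d‖ - ‖t • (a*q) + b‖ := by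
      filter_upwards [Ioo_mem_nhdsLT (show (0:ℝ) < 1 by norm_num)] with t ht
      have htq : ‖t • q‖ < 1 := by
        rw [norm_smul, hq, mul_one, Real.norm_eq_abs, abs_of_pos ht.1]
        exact ht.2
      have h := r1 (t • q) htq
      rw [mul_smul_comm, mul_smul_comm] at h
      linarith
    have h := ge_of_tendsto htt hev
    linarith
  -- boundary: denominator nonzero
  have bden : ∀ q : ℍ[ℝ], ‖q‖ = 1 → c*q+d ≠ 0 := by
    intro q hq hc0
    have h0 : a*q+b = 0 := by
      have h := bnd q hq
      rw [hc0, norm_zero] at h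
      exact norm_eq_zero.mp (le_antisymm h (norm_nonneg _))
    have hbq : b = -(a*q) := eq_neg_of_add_eq_zero_right h0
    have hdq : d = -(c*q) := eq_neg_of_add_eq_zero_right hc0
    have hq1 : normSq q = 1 := by rw [normSq_eq_sq_norm, hq]; norm_num
    have hterm : c * star a * b * star d = ((normSq a * normSq c : ℝ) : ℍ[ℝ]) := by
      rw [hbq, hdq]
      have e1 : c * star a * -(a*q) * star (-(c*q))
          = c * ((star a * a) * (q * star q)) * star c := by
        simp only [star_neg, star_mul]; noncomm_ring
      rw [e1, star_mul_self, self_mul_star, hq1]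
      rw [Quaternion.coe_one, mul_one, ← Quaternion.coe_commutes, mul_assoc,
        self_mul_star, ← Quaternion.coe_mul]
    have hre : (c * star a * b * star d).re = normSq a * normSq c := by
      rw [hterm, Quaternion.re_coe]
    have hnb : normSq b = normSq a := by rw [hbq, normSq_neg, map_mul, hq1, mul_one]
    have hnd : normSq d = normSq c := by rw [hdq, normSq_neg, map_mul, hq1, mul_one]
    rw [hre, hnb, hnd] at hE
    have hcontra : (0:ℝ) = 1 := by linear_combination hE
    exact zero_ne_one hcontra
  -- boundary: ≥
  have bge : ∀ q : ℍ[ℝ], ‖q‖ = 1 → ‖c*q+d‖ ≤ ‖a*q+b‖ := by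
    intro q hq
    by_contra hlt
    push_neg at hlt
    have hcq := bden q hq
    set w := (a*q+b) * (c*q+d)⁻¹ with hw
    have hwlt : ‖w‖ < 1 := by
      rw [hw, norm_mul, norm_inv, ← div_eq_mul_inv, div_lt_one (norm_pos_iff.mpr hcq)]
      exact hlt
    obtain ⟨q₁, hq₁mem, hq₁⟩ := hsurj (show w ∈ {q : ℍ[ℝ] | ‖q‖ < 1} from hwlt)
    simp only [Set.mem_setOf_eq] at hq₁mem hq₁
    have he₀ : w * (c*q+d) = a*q+b := by
      rw [hw]; exact inv_mul_cancel_right₀ hcq _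
    have he₁ : w * (c*q₁+d) = a*q₁+b := by
      rw [← hq₁]; exact inv_mul_cancel_right₀ (hden q₁ hq₁mem) _
    by_cases hA : a - w*c = 0
    · have h₁ : w*d - b = 0 := by rw [← lin_eq a b c d w q he₀, hA, zero_mul]
      have ha' : a = w*c := by
        have := sub_eq_zero.mp hA; exact this
      have hb' : b = w*d := (sub_eq_zero.mp h₁).symm
      have hterm : c * star a * b * star d
          = ((normSq c * normSq w * normSq d : ℝ) : ℍ[ℝ]) := by
        rw [ha', hb']
        have e1 : c * star (w*c) * (w*d) * star d
            = (c * star c) * (star w * w) * (d * star d) := by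
          simp only [star_mul]; noncomm_ring
        rw [e1, self_mul_star, star_mul_self, self_mul_star]
        norm_cast
      have hre : (c * star a * b * star d).re = normSq c * normSq w * normSq d := by
        rw [hterm, Quaternion.re_coe]
      have hna : normSq a = normSq w * normSq c := by rw [ha', map_mul]
      have hnb : normSq b = normSq w * normSq d := by rw [hb', map_mul]
      rw [hre, hna, hnb] at hE
      have hcontra : (0:ℝ) = 1 := by linear_combination hE
      exact zero_ne_one hcontra
    · have hqq : q₁ = q := mul_left_cancel₀ hA
        ((lin_eq a b c d w q₁ he₁).trans (lin_eq a b c d w q he₀).symm)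
      rw [hqq, hq] at hq₁mem
      exact lt_irrefl _ hq₁mem
  -- equality of normSq on the unit sphere
  have hsph : ∀ q : ℍ[ℝ], ‖q‖ = 1 → normSq (c*q+d) = normSq (a*q+b) := by
    intro q hq
    have h := le_antisymm (bge q hq) (bnd q hq)
    rw [normSq_eq_sq_norm, normSq_eq_sq_norm, h]
  set β : ℍ[ℝ] := star d * c - star b * a with hβ
  have hlin : ∀ q : ℍ[ℝ], ‖q‖ = 1 →
      (normSq c + normSq d) - (normSq a + normSq b) + 2*(β * q).re = 0 := by
    intro q hq
    have h := hsph q hq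
    have hq1 : normSq q = 1 := by rw [normSq_eq_sq_norm, hq]; norm_num
    rw [expandF c d q, expandF a b q, hq1] at h
    have hβq : (β * q).re = ((star d * c) * q).re - ((star b * a) * q).re := by
      rw [hβ, sub_mul, Quaternion.re_sub]
    rw [hβq]
    linarith
  -- specific unit quaternions
  have h1n : ‖(1 : ℍ[ℝ])‖ = 1 := norm_one
  have hm1n : ‖(-1 : ℍ[ℝ])‖ = 1 := by rw [norm_neg, norm_one]
  set I : ℍ[ℝ] := ⟨0,1,0,0⟩ with hI
  set J : ℍ[ℝ] := ⟨0,0,1,0⟩ with hJ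
  set K : ℍ[ℝ] := ⟨0,0,0,1⟩ with hK
  have hIn : ‖I‖ = 1 := norm_eq_one_of_normSq (by simp [Quaternion.normSq_def', show I.re = 0 from rfl, show I.imI = 1 from rfl, show I.imJ = 0 from rfl, show I.imK = 0 from rfl])
  have hJn : ‖J‖ = 1 := norm_eq_one_of_normSq (by simp [Quaternion.normSq_def', show J.re = 0 from rfl, show J.imI = 0 from rfl, show J.imJ = 1 from rfl, show J.imK = 0 from rfl])
  have hKn : ‖K‖ = 1 := norm_eq_one_of_normSq (by simp [Quaternion.normSq_def', show K.re = 0 from rfl, show K.imI = 0 from rfl, show K.imJ = 0 from rfl, show K.imK = 1 from rfl])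
  have hmIn : ‖-I‖ = 1 := by rw [norm_neg]; exact hIn
  have hmJn : ‖-J‖ = 1 := by rw [norm_neg]; exact hJn
  have hmKn : ‖-K‖ = 1 := by rw [norm_neg]; exact hKn
  have e1 := hlin 1 h1n
  have em1 := hlin (-1) hm1n
  have eI := hlin I hIn
  have emI := hlin (-I) hmIn
  have eJ := hlin J hJn
  have emJ := hlin (-J) hmJn
  have eK := hlin K hKn
  have emK := hlin (-K) hmKn
  rw [mul_one] at e1
  rw [mul_neg_one, Quaternion.re_neg] at em1
  rw [mul_neg, Quaternion.re_neg] at emI emJ emK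
  have hIre : (β * I).re = -β.imI := by
    simp [Quaternion.re_mul, show I.re = 0 from rfl, show I.imI = 1 from rfl, show I.imJ = 0 from rfl, show I.imK = 0 from rfl]
  have hJre : (β * J).re = -β.imJ := by
    simp [Quaternion.re_mul, show J.re = 0 from rfl, show J.imI = 0 from rfl, show J.imJ = 1 from rfl, show J.imK = 0 from rfl]
  have hKre : (β * K).re = -β.imK := by
    simp [Quaternion.re_mul, show K.re = 0 from rfl, show K.imI = 0 from rfl, show K.imJ = 0 from rfl, show K.imK = 1 from rfl]
  rw [hIre] at eI emI
  rw [hJre] at eJ emJ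
  rw [hKre] at eK emK
  have hre0 : β.re = 0 := by linarith
  have himI : β.imI = 0 := by linarith
  have himJ : β.imJ = 0 := by linarith
  have himK : β.imK = 0 := by linarith
  have hβ0 : β = 0 := by
    have hn : normSq β = 0 := by
      rw [Quaternion.normSq_def', hre0, himI, himJ, himK]
      norm_num
    exact normSq_eq_zero.mp hn
  have hKsum : normSq c + normSq d = normSq a + normSq b := by linarith
  have hbeta : star d * c = star b * a := by
    have h := hβ0
    rw [hβ, sub_eq_zero] at h
    exact h
  -- compute the trace term
  have htt : (c * star a * b * star d).re = normSq a * normSq b := by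
    have e1' : (c * star a * b * star d).re = ((star d * c) * (star a * b)).re := by
      rw [re_mul_comm]
      congr 1
      noncomm_ring
    have e2' : (star b * a) * (star a * b) = ((normSq a * normSq b : ℝ) : ℍ[ℝ]) := by
      have h : (star b * a) * (star a * b) = star b * (a * star a) * b := by noncomm_ring
      rw [h, self_mul_star, ← Quaternion.coe_commutes, mul_assoc, star_mul_self,
        ← Quaternion.coe_mul]
    rw [e1', hbeta, e2', Quaternion.re_coe]
  have hsr : normSq d * normSq c = normSq b * normSq a := by
    have h := congrArg normSq hbeta
    rwa [map_mul, map_mul, normSq_star, normSq_star] at h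
  have huv : (normSq a - normSq c) * (normSq d - normSq b) = 1 := by
    rw [htt] at hE
    linear_combination hE - hsr
  have hv : 0 < normSq d - normSq b := by
    have h := r1 0 (by simp)
    rw [mul_zero, mul_zero, zero_add, zero_add] at h
    rw [normSq_eq_sq_norm, normSq_eq_sq_norm]
    nlinarith [norm_nonneg b, norm_nonneg d]
  have huveq : normSq a - normSq c = normSq d - normSq b := by linarith
  have hv1 : normSq d - normSq b = 1 := by
    apply eq_one_of_sq_eq_one_of_pos _ hv
    nlinarith [huv, huveq]
  have hu1 : normSq a - normSq c = 1 := by linarith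
  refine ⟨?_, ?_, ?_, ?_⟩
  · rw [star_mul_self, star_mul_self, ← Quaternion.coe_sub, hu1, Quaternion.coe_one]
  · have h := congrArg star hbeta
    simp only [star_mul, star_star] at h
    rw [← h, sub_self]
  · rw [hbeta, sub_self]
  · rw [star_mul_self, star_mul_self, ← Quaternion.coe_sub,
      show normSq b - normSq d = -1 from by linarith, Quaternion.coe_neg, Quaternion.coe_one]
end FltSp11Aux

/-- A fractional linear transformation with Dieudonné determinant one is a Möbius
transformation of the quaternionic unit disc `Δ_ℍ` if and only if its matrix lies
in `Sp(1,1)`. -/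
theorem flt_moebius_iff_mem_sp11 (a b c d : ℍ[ℝ])
    (hdet : detH !![a, b; c, d] = 1) :
    (!![a, b; c, d]).conjTranspose * !![(1 : ℍ[ℝ]), 0; 0, -1] * !![a, b; c, d] =
        !![(1 : ℍ[ℝ]), 0; 0, -1] ↔
      ((∀ q : ℍ[ℝ], ‖q‖ < 1 → c * q + d ≠ 0) ∧
        Set.BijOn (fun q : ℍ[ℝ] => (a * q + b) * (c * q + d)⁻¹)
          {q : ℍ[ℝ] | ‖q‖ < 1} {q : ℍ[ℝ] | ‖q‖ < 1}) := by
  have hE : Quaternion.normSq a * Quaternion.normSq d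
      + Quaternion.normSq c * Quaternion.normSq b
      - 2*(c * star a * b * star d).re = 1 := by
    have h := hdet
    unfold detH at h
    simp only [Matrix.cons_val', Matrix.cons_val_zero, Matrix.cons_val_one, Matrix.head_cons,
      Matrix.empty_val', Matrix.cons_val_fin_one, Matrix.head_fin_const, Matrix.of_apply] at h
    rw [Real.sqrt_eq_one] at h
    rw [FltSp11Aux.normSq_eq_sq_norm, FltSp11Aux.normSq_eq_sq_norm,
      FltSp11Aux.normSq_eq_sq_norm, FltSp11Aux.normSq_eq_sq_norm]
    linarith
  rw [FltSp11Aux.matrix_iff]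
  constructor
  · rintro ⟨h1, h2, h3, h4⟩
    exact FltSp11Aux.forward_dir a b c d h1 h2 h3 h4
  · rintro ⟨hden, hbij⟩
    exact FltSp11Aux.reverse_dir a b c d hE hden hbij
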